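/- Let F be a field satisfying condition Π_k, let k ≥ 2, and let A be a k×(n−k) matrix over F such that the block matrix G = (I_k | A) is not an LCED matrix. Then there exists a constant β ∈ F with (n−k)·β² = −k such that the sum of the entries on every column of A equals β. -/

import Mathlib

open Matrix

/-- The permutation matrix of `σ`: the `(i, j)` entry is `1` if `σ j = i` and `0` otherwise. -/
def permMat (F : Type*) [Zero F] [One F] {n : Type*} [DecidableEq n]
    (σ : Equiv.Perm n) : Matrix n n F :=
  Matrix.of fun i j => if σ j = i then 1 else 0

/-- A matrix `G` over a field is an LCED matrix if there is a permutation matrix `P`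
such that `G * P * Gᵀ` is invertible. -/
def IsLCEDMatrix {F : Type*} [Field F] {k n : Type*} [Fintype k] [Fintype n]
    [DecidableEq k] [DecidableEq n] (G : Matrix k n F) : Prop :=
  ∃ σ : Equiv.Perm n, IsUnit (G * permMat F σ * Gᵀ)

/-- A field `F` satisfies condition `Π_k` if every symmetric `k × k` matrix `M` such that
`-1` is an eigenvalue of `P * M` for every permutation matrix `P` has the sum of all of
its entries equal to `-k`. -/
def PiCond (F : Type*) [Field F] (k : ℕ) : Prop :=
  ∀ M : Matrix (Fin k) (Fin k) F, M.IsSymm →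
    (∀ σ : Equiv.Perm (Fin k), ((1 : Matrix (Fin k) (Fin k) F) + permMat F σ * M).det = 0) →
    ∑ i, ∑ j, M i j = -(k : F)

section AuxPerm

variable {F : Type*} [Field F] {n : Type*} [Fintype n] [DecidableEq n]

lemma permMat_mul_apply {p : Type*} (σ : Equiv.Perm n) (M : Matrix n p F) (i : n) (j : p) :
    (permMat F σ * M) i j = M (σ⁻¹ i) j := by
  simp only [Matrix.mul_apply, permMat, Matrix.of_apply]
  rw [Finset.sum_eq_single (σ⁻¹ i)]
  · simp
  · intro b _ hb
    rw [if_neg, zero_mul]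
    intro hsb
    exact hb (by simp [← hsb])
  · simp

lemma mul_permMat_apply {p : Type*} [Fintype p] [DecidableEq p]
    (σ : Equiv.Perm p) (M : Matrix n p F) (i : n) (j : p) :
    (M * permMat F σ) i j = M i (σ j) := by
  simp only [Matrix.mul_apply, permMat, Matrix.of_apply]
  rw [Finset.sum_eq_single (σ j)]
  · simp
  · intro b _ hb
    rw [if_neg (fun hsb => hb hsb.symm), mul_zero]
  · simp

lemma permMat_mul_permMat (σ τ : Equiv.Perm n) :
    permMat F σ * permMat F τ = permMat F (σ * τ) := by
  ext i j
  rw [mul_permMat_apply]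
  simp only [permMat, Matrix.of_apply, Equiv.Perm.coe_mul, Function.comp_apply]
  rfl

lemma permMat_one : permMat F (1 : Equiv.Perm n) = 1 := by
  ext i j
  simp [permMat, Matrix.one_apply, eq_comm]

lemma permMat_transpose (σ : Equiv.Perm n) :
    (permMat F σ)ᵀ = permMat F σ⁻¹ := by
  ext i j
  simp only [Matrix.transpose_apply, permMat, Matrix.of_apply]
  congr 1
  rw [eq_iff_iff]
  constructor <;> (intro h'; subst h'; simp)

lemma permMat_sumCongr {p : Type*} [Fintype p] [DecidableEq p]
    (σ : Equiv.Perm n) (τ : Equiv.Perm p) :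
    permMat F (Equiv.sumCongr σ τ) =
      fromBlocks (permMat F σ) 0 0 (permMat F τ) := by
  ext (i | i) (j | j) <;>
    simp [permMat, fromBlocks]

end AuxPerm

/-- if `F` satisfies `Π_k`, `k ≥ 2`, and `(I_k | A)` is not an LCED matrix,
then there is `β ∈ F` with `(n-k)·β² = -k` such that every column of `A` sums to `β`. -/
theorem stmt11 {F : Type*} [Field F] {k m : ℕ} (hk : 2 ≤ k) (hPi : PiCond F k)
    (A : Matrix (Fin k) (Fin m) F)
    (h : ¬ IsLCEDMatrix (fromCols (1 : Matrix (Fin k) (Fin k) F) A)) :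
    ∃ β : F, (m : F) * β ^ 2 = -(k : F) ∧ ∀ j, ∑ i, A i j = β := by
  set c : Fin m → F := fun j => ∑ i, A i j with hc
  -- determinant consequence of non-LCED
  have hdet : ∀ (σ₁ : Equiv.Perm (Fin k)) (τ : Equiv.Perm (Fin m)),
      (permMat F σ₁ + A * permMat F τ * Aᵀ).det = 0 := by
    intro σ₁ τ
    by_contra hne
    apply h
    refine ⟨Equiv.sumCongr σ₁ τ, ?_⟩
    have hG : fromCols (1 : Matrix (Fin k) (Fin k) F) A * permMat F (Equiv.sumCongr σ₁ τ) *
        (fromCols (1 : Matrix (Fin k) (Fin k) F) A)ᵀ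
        = permMat F σ₁ + A * permMat F τ * Aᵀ := by
      rw [permMat_sumCongr, fromCols_mul_fromBlocks, transpose_fromCols,
        fromCols_mul_fromRows]
      simp [Matrix.mul_assoc]
    rw [hG]
    exact (Matrix.isUnit_iff_isUnit_det _).2 (isUnit_iff_ne_zero.2 hne)
  -- key: for any involutive τ, ∑ p, c (τ p) * c p = -k
  have key : ∀ τ : Equiv.Perm (Fin m), τ⁻¹ = τ → ∑ p, c (τ p) * c p = -(k : F) := by
    intro τ hτ
    set M : Matrix (Fin k) (Fin k) F := A * permMat F τ * Aᵀ with hM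
    have hsymm : M.IsSymm := by
      unfold Matrix.IsSymm
      rw [hM, Matrix.transpose_mul, Matrix.transpose_mul, Matrix.transpose_transpose,
        permMat_transpose, hτ, Matrix.mul_assoc]
    have hMdet : ∀ σ : Equiv.Perm (Fin k),
        ((1 : Matrix (Fin k) (Fin k) F) + permMat F σ * M).det = 0 := by
      intro σ
      have h1 : (1 : Matrix (Fin k) (Fin k) F) + permMat F σ * M
          = permMat F σ * (permMat F σ⁻¹ + M) := by
        rw [Matrix.mul_add, permMat_mul_permMat, mul_inv_cancel, permMat_one]
      rw [h1, Matrix.det_mul, hdet σ⁻¹ τ, mul_zero]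
    have hsum := hPi M hsymm hMdet
    have hMapp : ∀ i i', M i i' = ∑ p, A i (τ p) * A i' p := by
      intro i i'
      rw [hM, Matrix.mul_apply]
      refine Finset.sum_congr rfl fun p _ => ?_
      rw [mul_permMat_apply, Matrix.transpose_apply]
    calc ∑ p, c (τ p) * c p
        = ∑ p, ∑ i, ∑ i', A i (τ p) * A i' p := by
          refine Finset.sum_congr rfl fun p _ => ?_
          rw [hc]
          rw [Finset.sum_mul_sum]
      _ = ∑ i, ∑ p, ∑ i', A i (τ p) * A i' p := Finset.sum_comm
      _ = ∑ i, ∑ i', ∑ p, A i (τ p) * A i' p :=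
          Finset.sum_congr rfl fun i _ => Finset.sum_comm
      _ = ∑ i, ∑ i', M i i' := by
          refine Finset.sum_congr rfl fun i _ => Finset.sum_congr rfl fun i' _ => ?_
          rw [hMapp]
      _ = -(k : F) := hsum
  have hone : ∑ p, c p * c p = -(k : F) := by
    have := key 1 rfl
    simpa using this
  -- all column sums are equal
  have hcols : ∀ j j' : Fin m, c j = c j' := by
    intro j j'
    by_cases hjj : j = j'
    · rw [hjj]
    have hswap := key (Equiv.swap j j') (Equiv.swap_inv j j')
    have hdiff : ∑ p, ((c (Equiv.swap j j' p) - c p) * c p) = 0 := by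
      simp_rw [sub_mul, Finset.sum_sub_distrib, hswap, hone, sub_self]
    have hzero : ∀ p ∈ Finset.univ, p ∉ ({j, j'} : Finset (Fin m)) →
        (c (Equiv.swap j j' p) - c p) * c p = 0 := by
      intro p _ hp
      simp only [Finset.mem_insert, Finset.mem_singleton, not_or] at hp
      rw [Equiv.swap_apply_of_ne_of_ne hp.1 hp.2, sub_self, zero_mul]
    have hsub : ∑ p ∈ ({j, j'} : Finset (Fin m)), ((c (Equiv.swap j j' p) - c p) * c p)
        = ∑ p, ((c (Equiv.swap j j' p) - c p) * c p) :=
      Finset.sum_subset (Finset.subset_univ _) hzero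
    rw [hdiff, Finset.sum_pair hjj] at hsub
    rw [Equiv.swap_apply_left, Equiv.swap_apply_right] at hsub
    have hsq : (c j - c j') * (c j - c j') = 0 := by ring_nf; linear_combination -hsub
    exact sub_eq_zero.mp (mul_self_eq_zero.mp hsq)
  -- conclude
  rcases Nat.eq_zero_or_pos m with hm | hm
  · refine ⟨0, ?_, ?_⟩
    · subst hm
      have : (-(k : F)) = 0 := by rw [← hone]; simp
      rw [this]
      simp
    · intro j
      subst hm
      exact j.elim0
  · refine ⟨c ⟨0, hm⟩, ?_, fun j => hcols j ⟨0, hm⟩⟩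
    have : ∑ p : Fin m, c p * c p = ∑ p : Fin m, c ⟨0, hm⟩ * c ⟨0, hm⟩ :=
      Finset.sum_congr rfl fun p _ => by rw [hcols p ⟨0, hm⟩]
    rw [this, Finset.sum_const, Finset.card_univ, Fintype.card_fin, nsmul_eq_mul] at hone
    rw [← hone]; ring
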